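/- Let B be a complete Hausdorff topological field of characteristic zero, and let R be a B-vector space with the inductive limit topology coming from its finite-dimensional subspaces. If C ⊆ R is compact, then C is contained in a finite-dimensional subspace V ⊆ R. -/

import Mathlib

open Topology


/-- The canonical topology on a finite-dimensional vector space `V` over a
topological field `B`. -/
noncomputable def canonicalFDTopology (B V : Type*) [Field B] [TopologicalSpace B]
    [AddCommGroup V] [Module B V] [FiniteDimensional B V] : TopologicalSpace V :=
  TopologicalSpace.induced (Module.finBasis B V).equivFun Pi.topologicalSpace

/-- The inductive limit topology on a `B`-vector space `R` coming from its
finite-dimensional subspaces. -/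
noncomputable def indLimTopology (B R : Type*) [Field B] [TopologicalSpace B]
    [AddCommGroup R] [Module B R] : TopologicalSpace R :=
  ⨆ (V : Submodule B R) (h : FiniteDimensional B V),
    TopologicalSpace.coinduced (Subtype.val : V → R) (@canonicalFDTopology B V _ _ _ _ h)

/-- Auxiliary: the canonical topology on a finite-dimensional space over a
Hausdorff topological field is Hausdorff. -/
theorem canonicalFDTopology_t2 (B V : Type*) [Field B] [TopologicalSpace B] [T2Space B]
    [AddCommGroup V] [Module B V] [FiniteDimensional B V] :
    @T2Space V (canonicalFDTopology B V) := by
  letI : TopologicalSpace V := canonicalFDTopology B V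
  have he : Topology.IsEmbedding ((Module.finBasis B V).equivFun : V → (Fin _ → B)) :=
    ⟨⟨rfl⟩, (Module.finBasis B V).equivFun.injective⟩
  exact he.t2Space

/-- Over a complete Hausdorff topological field `B` of
characteristic zero, any compact subset of a `B`-vector space `R` with the
inductive limit topology is contained in a finite-dimensional subspace. -/
theorem compact_subset_finiteDimensional_indLim {B : Type*} [Field B] [UniformSpace B]
    [CompleteSpace B] [T2Space B] [IsTopologicalRing B] [CharZero B]
    {R : Type*} [AddCommGroup R] [Module B R]
    (C : Set R) (hC : @IsCompact R (indLimTopology B R) C) :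
    ∃ V : Submodule B R, FiniteDimensional B ↥V ∧ C ⊆ (V : Set R) := by
  letI tR : TopologicalSpace R := indLimTopology B R
  by_contra h
  push_neg at h
  -- get an infinite linearly independent subset b of C
  obtain ⟨b, hbC, hspanb, hli⟩ := exists_linearIndependent B C
  have hbinf : b.Infinite := by
    intro hfin
    exact h (Submodule.span B C) (hspanb ▸ FiniteDimensional.span_of_finite B hfin)
      Submodule.subset_span
  -- every subset of b is closed in the inductive limit topology
  have key : ∀ T : Set R, T ⊆ b → IsClosed T := by
    intro T hTb
    have : IsClosed[indLimTopology B R] T := by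
      rw [indLimTopology, isClosed_iSup_iff]
      intro V
      rw [isClosed_iSup_iff]
      intro hV
      rw [isClosed_coinduced]
      letI : TopologicalSpace V := @canonicalFDTopology B V _ _ _ _ hV
      haveI : T2Space V := @canonicalFDTopology_t2 B V _ _ _ _ _ hV
      -- preimage is finite
      have hfin : (Subtype.val ⁻¹' T : Set V).Finite := by
        have hliT : LinearIndependent B (fun x : T => (x : R)) := LinearIndepOn.mono (R := B) (v := id) hli hTb
        have hcomp : LinearIndependent B
            (fun x : (Subtype.val ⁻¹' T : Set V) => ((x : V) : R)) := by
          have := hliT.comp (fun x : (Subtype.val ⁻¹' T : Set V) => (⟨(x : V), x.2⟩ : T))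
            (fun x y hxy => by
              have : ((x : V) : R) = ((y : V) : R) := by
                simpa only [Subtype.mk.injEq] using hxy
              exact Subtype.ext (Subtype.ext this))
          exact this
        have hliV : LinearIndependent B
            (fun x : (Subtype.val ⁻¹' T : Set V) => (x : V)) :=
          LinearIndependent.of_comp V.subtype hcomp
        exact @LinearIndependent.setFinite B V _ _ _ _ hV _ hliV
      exact hfin.isClosed
    exact this
  -- b is closed, hence compact
  have hbclosed : IsClosed b := key b (subset_refl b)
  have hbcompact : IsCompact b := hC.of_isClosed_subset hbclosed hbC
  -- b is discrete
  haveI : DiscreteTopology b := by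
    rw [discreteTopology_iff_isOpen_singleton]
    intro x
    have hcl : IsClosed (b \ {(x : R)}) := key _ Set.diff_subset
    have : IsOpen (Subtype.val ⁻¹' (b \ {(x : R)})ᶜ : Set b) :=
      hcl.isOpen_compl.preimage continuous_subtype_val
    convert this using 1
    ext y
    simp only [Set.mem_singleton_iff, Set.mem_preimage, Set.mem_compl_iff, Set.mem_diff,
      not_and, not_not]
    constructor
    · rintro rfl; intro _; rfl
    · intro hy; exact Subtype.ext (hy y.2)
  exact hbinf (hbcompact.finite (isDiscrete_iff_discreteTopology.mpr ‹_›))
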